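/- Fix q > 0, an integer n ≥ 1, 0 < λ < n, and integers m, r with 1 ≤ r < m < n. Then Z_{n,λ,q}[ {|V_r| = m and N_r = 1} ] = C(n,m) (1 − λ/n)^{m(n−m)} · Z^{(m)}[K^{(m)}] · Z^{(n−m)}[B_r^{(n−m)}], where C(n,m) is the binomial coefficient, Z^{(m)}[K^{(m)}] is the total random cluster weight (with edge weight p = λ/n and cluster weight q) of configurations on the complete graph K_m that are connected, and Z^{(n−m)}[B_r^{(n−m)}] is the total random cluster weight (with edge weight p = λ/n and cluster weight q) of configurations on the complete graph K_{n−m} with no connected component of size larger than r. -/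

import Mathlib

open Filter Topology Set

noncomputable section

/-- Size of the connected component of `K_n(ω)` containing the vertex `v`. -/
def compSize {n : ℕ} (G : SimpleGraph (Fin n)) (v : Fin n) : ℕ :=
  (G.connectedComponentMk v).supp.ncard

/-- Random cluster weight of a configuration `G` on the complete graph `K_m`,
with edge weight `p` and cluster weight `q`. -/
def rcW (m : ℕ) (p q : ℝ) (G : SimpleGraph (Fin m)) : ℝ :=
  p ^ G.edgeSet.ncard * (1 - p) ^ (m * (m - 1) / 2 - G.edgeSet.ncard) *
    q ^ Nat.card G.ConnectedComponent

/-- Total random-cluster weight of an event, with explicit edge weight `p`. -/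
def ZP (m : ℕ) (p q : ℝ) (A : Set (SimpleGraph (Fin m))) : ℝ :=
  ∑ᶠ G ∈ A, rcW m p q G

/-- `Z_{n,λ,q}[A]`, i.e. the total weight of the event `A` with `p = λ/n`. -/
def Zrc (n : ℕ) (lam q : ℝ) (A : Set (SimpleGraph (Fin n))) : ℝ :=
  ZP n (lam / n) q A

/-- The partition function `Z_{n,λ,q}`. -/
def Ztot (n : ℕ) (lam q : ℝ) : ℝ := Zrc n lam q Set.univ

/-- The random cluster probability `φ_{n,λ,q}[A]`. -/
def phiRC (n : ℕ) (lam q : ℝ) (A : Set (SimpleGraph (Fin n))) : ℝ :=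
  Zrc n lam q A / Ztot n lam q

/-- The event `K` that the configuration is connected. -/
def Kev (n : ℕ) : Set (SimpleGraph (Fin n)) := {G | G.Connected}

/-- The event `B_r` that no connected component has size larger than `r`. -/
def Bev (n : ℕ) (r : ℝ) : Set (SimpleGraph (Fin n)) :=
  {G | ∀ v, (compSize G v : ℝ) ≤ r}

/-- The event `L` that the configuration is acyclic. -/
def Lev (n : ℕ) : Set (SimpleGraph (Fin n)) := {G | G.IsAcyclic}

/-- The set `V_r` of vertices lying in components of size larger than `r`. -/
def Vbig {n : ℕ} (G : SimpleGraph (Fin n)) (r : ℝ) : Set (Fin n) :=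
  {v | r < (compSize G v : ℝ)}

/-- The number `N_r` of connected components of size larger than `r`. -/
def Nbig {n : ℕ} (G : SimpleGraph (Fin n)) (r : ℝ) : ℕ :=
  {C : G.ConnectedComponent | r < (C.supp.ncard : ℝ)}.ncard

def pi1 (x : ℝ) : ℝ := 1 - Real.exp (-x)

def Psi (x : ℝ) : ℝ := min (Real.log x - (x - 1/x) / 2) 0

def Sent (θ : ℝ) : ℝ := θ * Real.log θ + (1 - θ) * Real.log (1 - θ)

def Phi (θ lam q : ℝ) : ℝ :=
  -Sent θ + (1 - θ) * Real.log (1 - pi1 (lam * θ)) + θ * Real.log (pi1 (lam * θ)) +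
    (1 - θ) * (Psi (lam * (1 - θ) / q) - ((q - 1) / (2 * q)) * (lam * (1 - θ)) + Real.log q)

namespace SGAux
open SimpleGraph

variable {α β : Type*} {G : SimpleGraph α} {H : SimpleGraph β}

lemma walk_inl {x y : α ⊕ β} (w : (G ⊕g H).Walk x y) :
    ∀ u : α, x = Sum.inl u → ∃ v, y = Sum.inl v ∧ G.Reachable u v := by
  induction w with
  | nil => exact fun u h => ⟨u, h, Reachable.refl u⟩
  | @cons a b c h p ih =>
    rintro u rfl
    rcases b with b | b
    · obtain ⟨v, rfl, hv⟩ := ih b rfl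
      exact ⟨v, rfl, ((show G.Adj u b from h).reachable).trans hv⟩
    · simp [SimpleGraph.sum] at h

lemma walk_inr {x y : α ⊕ β} (w : (G ⊕g H).Walk x y) :
    ∀ u : β, x = Sum.inr u → ∃ v, y = Sum.inr v ∧ H.Reachable u v := by
  induction w with
  | nil => exact fun u h => ⟨u, h, Reachable.refl u⟩
  | @cons a b c h p ih =>
    rintro u rfl
    rcases b with b | b
    · simp [SimpleGraph.sum] at h
    · obtain ⟨v, rfl, hv⟩ := ih b rfl
      exact ⟨v, rfl, ((show H.Adj u b from h).reachable).trans hv⟩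

lemma reachable_inl_inl {u v : α} :
    (G ⊕g H).Reachable (Sum.inl u) (Sum.inl v) ↔ G.Reachable u v := by
  constructor
  · rintro ⟨w⟩
    obtain ⟨v', hv', h⟩ := walk_inl w u rfl
    cases hv'; exact h
  · exact fun h => h.map (Embedding.sumInl : G ↪g G ⊕g H).toHom

lemma reachable_inr_inr {u v : β} :
    (G ⊕g H).Reachable (Sum.inr u) (Sum.inr v) ↔ H.Reachable u v := by
  constructor
  · rintro ⟨w⟩
    obtain ⟨v', hv', h⟩ := walk_inr w u rfl
    cases hv'; exact h
  · exact fun h => h.map (Embedding.sumInr : H ↪g G ⊕g H).toHom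

lemma not_reachable_inl_inr {u : α} {v : β} :
    ¬ (G ⊕g H).Reachable (Sum.inl u) (Sum.inr v) := by
  rintro ⟨w⟩
  obtain ⟨v', hv', -⟩ := walk_inl w u rfl
  simp at hv'

/-- components of a disjoint sum -/
def sumCompEquiv (G : SimpleGraph α) (H : SimpleGraph β) :
    (G ⊕g H).ConnectedComponent ≃ G.ConnectedComponent ⊕ H.ConnectedComponent where
  toFun := ConnectedComponent.lift
    (Sum.elim (fun u => Sum.inl (G.connectedComponentMk u))
      (fun u => Sum.inr (H.connectedComponentMk u)))
    (by
      intro x y w _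
      rcases x with x | x <;> rcases y with y | y
      · simp only [Sum.elim_inl, Sum.inl.injEq]
        exact ConnectedComponent.sound (reachable_inl_inl.mp w.reachable)
      · exact absurd w.reachable not_reachable_inl_inr
      · exact absurd w.reachable.symm not_reachable_inl_inr
      · simp only [Sum.elim_inr, Sum.inr.injEq]
        exact ConnectedComponent.sound (reachable_inr_inr.mp w.reachable))
  invFun := Sum.elim
    (ConnectedComponent.lift (fun u => (G ⊕g H).connectedComponentMk (Sum.inl u))
      (fun u v w _ => ConnectedComponent.sound (reachable_inl_inl.mpr w.reachable)))
    (ConnectedComponent.lift (fun u => (G ⊕g H).connectedComponentMk (Sum.inr u))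
      (fun u v w _ => ConnectedComponent.sound (reachable_inr_inr.mpr w.reachable)))
  left_inv := by
    refine ConnectedComponent.ind ?_
    rintro (u | u) <;> rfl
  right_inv := by
    rintro (C | C) <;> refine ConnectedComponent.ind ?_ C <;> intro u <;> rfl

@[simp] lemma sumCompEquiv_symm_inl (u : α) :
    (sumCompEquiv G H).symm (Sum.inl (G.connectedComponentMk u)) =
      (G ⊕g H).connectedComponentMk (Sum.inl u) := rfl

@[simp] lemma sumCompEquiv_symm_inr (u : β) :
    (sumCompEquiv G H).symm (Sum.inr (H.connectedComponentMk u)) =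
      (G ⊕g H).connectedComponentMk (Sum.inr u) := rfl

lemma supp_sum_inl (u : α) :
    ((G ⊕g H).connectedComponentMk (Sum.inl u)).supp =
      Sum.inl '' (G.connectedComponentMk u).supp := by
  ext x
  rcases x with x | x
  · simp only [ConnectedComponent.mem_supp_iff, ConnectedComponent.eq, Set.mem_image]
    rw [reachable_inl_inl]
    constructor
    · exact fun h => ⟨x, by simpa [ConnectedComponent.eq] using h, rfl⟩
    · rintro ⟨y, hy, hxy⟩
      cases hxy
      simpa [ConnectedComponent.eq] using hy
  · simp only [ConnectedComponent.mem_supp_iff, ConnectedComponent.eq, Set.mem_image]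
    constructor
    · exact fun h => absurd h.symm not_reachable_inl_inr
    · rintro ⟨y, -, hxy⟩; cases hxy

lemma supp_sum_inr (u : β) :
    ((G ⊕g H).connectedComponentMk (Sum.inr u)).supp =
      Sum.inr '' (H.connectedComponentMk u).supp := by
  ext x
  rcases x with x | x
  · simp only [ConnectedComponent.mem_supp_iff, ConnectedComponent.eq, Set.mem_image]
    constructor
    · exact fun h => absurd h not_reachable_inl_inr
    · rintro ⟨y, -, hxy⟩; cases hxy
  · simp only [ConnectedComponent.mem_supp_iff, ConnectedComponent.eq, Set.mem_image]
    rw [reachable_inr_inr]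
    constructor
    · exact fun h => ⟨x, by simpa [ConnectedComponent.eq] using h, rfl⟩
    · rintro ⟨y, hy, hxy⟩
      cases hxy
      simpa [ConnectedComponent.eq] using hy

lemma edgeSet_sum :
    (G ⊕g H).edgeSet = Sym2.map Sum.inl '' G.edgeSet ∪ Sym2.map Sum.inr '' H.edgeSet := by
  apply Set.Subset.antisymm
  · intro e he
    induction e using Sym2.ind with
    | _ x y =>
      rw [mem_edgeSet] at he
      rcases x with x | x <;> rcases y with y | y
      · exact Or.inl ⟨s(x, y), he, rfl⟩
      · simp [SimpleGraph.sum] at he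
      · simp [SimpleGraph.sum] at he
      · exact Or.inr ⟨s(x, y), he, rfl⟩
  · rintro e (⟨e', he', rfl⟩ | ⟨e', he', rfl⟩)
    · induction e' using Sym2.ind with
      | _ a b => exact he'
    · induction e' using Sym2.ind with
      | _ a b => exact he'


lemma ncard_edgeSet_sum [Finite α] [Finite β] :
    (G ⊕g H).edgeSet.ncard = G.edgeSet.ncard + H.edgeSet.ncard := by
  rw [edgeSet_sum, Set.ncard_union_eq, Set.ncard_image_of_injective _ (Sym2.map.injective Sum.inl_injective),
    Set.ncard_image_of_injective _ (Sym2.map.injective Sum.inr_injective)]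
  · rw [Set.disjoint_left]
    rintro e ⟨e1, -, rfl⟩ ⟨e2, -, he⟩
    revert he
    induction e1 using Sym2.ind with
    | _ a b =>
      induction e2 using Sym2.ind with
      | _ c d =>
        intro he
        simp only [Sym2.map_pair_eq, Sym2.eq, Sym2.rel_iff', Prod.mk.injEq, Prod.swap_prod_mk] at he
        rcases he with ⟨h, -⟩ | ⟨h, -⟩ <;> cases h

lemma card_cc_sum [Finite α] [Finite β] :
    Nat.card (G ⊕g H).ConnectedComponent =
      Nat.card G.ConnectedComponent + Nat.card H.ConnectedComponent := by
  rw [Nat.card_congr (sumCompEquiv G H), Nat.card_sum]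

lemma supp_ncard_congr {α' : Type*} {G' : SimpleGraph α'} (φ : G ≃g G') (C : G.ConnectedComponent) :
    (φ.connectedComponentEquiv C).supp.ncard = C.supp.ncard := by
  rw [← Nat.card_coe_set_eq, ← Nat.card_coe_set_eq]
  exact (Nat.card_congr (SimpleGraph.ConnectedComponent.isoEquivSupp φ C)).symm

lemma ncard_edgeSet_congr {α' : Type*} {G' : SimpleGraph α'} (φ : G ≃g G') :
    G.edgeSet.ncard = G'.edgeSet.ncard := by
  rw [← Nat.card_coe_set_eq, ← Nat.card_coe_set_eq]
  exact Nat.card_congr φ.mapEdgeSet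

lemma card_cc_congr {α' : Type*} {G' : SimpleGraph α'} (φ : G ≃g G') :
    Nat.card G.ConnectedComponent = Nat.card G'.ConnectedComponent :=
  Nat.card_congr φ.connectedComponentEquiv

lemma card_cc_eq_one_iff [Finite α] [Nonempty α] :
    Nat.card G.ConnectedComponent = 1 ↔ G.Connected := by
  rw [Nat.card_eq_one_iff_unique]
  constructor
  · rintro ⟨hs, -⟩
    have hpre : G.Preconnected := fun u v =>
      (SimpleGraph.ConnectedComponent.eq).mp
        (hs.allEq (G.connectedComponentMk u) (G.connectedComponentMk v))
    exact SimpleGraph.Connected.mk hpre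
  · intro h
    constructor
    · constructor
      intro C D
      refine SimpleGraph.ConnectedComponent.ind₂ (fun u v => ?_) C D
      exact SimpleGraph.ConnectedComponent.sound (h.preconnected u v)
    · exact ⟨G.connectedComponentMk (Classical.arbitrary α)⟩

lemma triangle_add {a b : ℕ} (ha : 1 ≤ a) (hb : 1 ≤ b) :
    (a + b) * (a + b - 1) / 2 = a * (a - 1) / 2 + b * (b - 1) / 2 + a * b := by
  obtain ⟨a, rfl⟩ : ∃ a', a = a' + 1 := ⟨a - 1, by omega⟩
  obtain ⟨b, rfl⟩ : ∃ b', b = b' + 1 := ⟨b - 1, by omega⟩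
  have e1 : (a + 1) * (a + 1 - 1) = a * (a + 1) := by
    simp [Nat.mul_comm]
  have e2 : (b + 1) * (b + 1 - 1) = b * (b + 1) := by
    simp [Nat.mul_comm]
  have e3 : (a + 1 + (b + 1)) * (a + 1 + (b + 1) - 1) = (a + b + 1) * (a + b + 2) := by
    have h : a + 1 + (b + 1) - 1 = a + b + 1 := by omega
    rw [h]; ring
  rw [e1, e2, e3]
  have d1 : 2 ∣ a * (a + 1) := (Nat.even_mul_succ_self a).two_dvd
  have d2 : 2 ∣ b * (b + 1) := (Nat.even_mul_succ_self b).two_dvd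
  have d3 : 2 ∣ (a + b + 1) * (a + b + 2) := by
    have := (Nat.even_mul_succ_self (a + b + 1)).two_dvd
    simpa using this
  have key : (a + b + 1) * (a + b + 2) = a * (a + 1) + b * (b + 1) + 2 * ((a + 1) * (b + 1)) := by
    ring
  omega

lemma ncard_edgeSet_le (m : ℕ) (G : SimpleGraph (Fin m)) :
    G.edgeSet.ncard ≤ m * (m - 1) / 2 := by
  classical
  have h1 : G.edgeSet ⊆ (⊤ : SimpleGraph (Fin m)).edgeSet := SimpleGraph.edgeSet_mono le_top
  have h2 : ((⊤ : SimpleGraph (Fin m)).edgeSet).ncard = m * (m - 1) / 2 := by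
    rw [Set.ncard_eq_toFinset_card']
    have := SimpleGraph.card_edgeFinset_top_eq_card_choose_two (V := Fin m)
    rw [SimpleGraph.edgeFinset] at this
    simp only [Fintype.card_fin] at this
    rw [this, Nat.choose_two_right]
  calc G.edgeSet.ncard ≤ ((⊤ : SimpleGraph (Fin m)).edgeSet).ncard :=
        Set.ncard_le_ncard h1 (Set.toFinite _)
    _ = m * (m - 1) / 2 := h2

end SGAux

namespace SGAux
open SimpleGraph

variable {n m k : ℕ} (e : Fin n ≃ (Fin m ⊕ Fin k))

def PhiG (G₁ : SimpleGraph (Fin m)) (G₂ : SimpleGraph (Fin k)) : SimpleGraph (Fin n) :=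
  (G₁ ⊕g G₂).comap ⇑e.toEmbedding

def phiIso (G₁ : SimpleGraph (Fin m)) (G₂ : SimpleGraph (Fin k)) :
    PhiG e G₁ G₂ ≃g (G₁ ⊕g G₂) := Iso.comap e (G₁ ⊕g G₂)

lemma compSize_phi (G₁ : SimpleGraph (Fin m)) (G₂ : SimpleGraph (Fin k)) (x : Fin n) :
    compSize (PhiG e G₁ G₂) x =
      Sum.elim (fun u => compSize G₁ u) (fun u => compSize G₂ u) (e x) := by
  unfold compSize
  rw [← supp_ncard_congr (phiIso e G₁ G₂) ((PhiG e G₁ G₂).connectedComponentMk x)]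
  have h1 : (phiIso e G₁ G₂).connectedComponentEquiv ((PhiG e G₁ G₂).connectedComponentMk x)
      = (G₁ ⊕g G₂).connectedComponentMk (e x) := rfl
  rw [h1]
  rcases hx : e x with u | u
  · rw [supp_sum_inl, Set.ncard_image_of_injective _ Sum.inl_injective, Sum.elim_inl]
  · rw [supp_sum_inr, Set.ncard_image_of_injective _ Sum.inr_injective, Sum.elim_inr]

lemma compSize_of_connected {G₁ : SimpleGraph (Fin m)} (h : G₁.Connected) (u : Fin m) :
    compSize G₁ u = m := by
  unfold compSize
  have h1 : (G₁.connectedComponentMk u).supp = Set.univ := by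
    ext v
    simp only [SimpleGraph.ConnectedComponent.mem_supp_iff, SimpleGraph.ConnectedComponent.eq,
      Set.mem_univ, iff_true]
    exact h.preconnected v u
  rw [h1, Set.ncard_univ, Nat.card_eq_fintype_card, Fintype.card_fin]

def E2 (G₁ : SimpleGraph (Fin m)) (G₂ : SimpleGraph (Fin k)) :
    (PhiG e G₁ G₂).ConnectedComponent ≃ (G₁.ConnectedComponent ⊕ G₂.ConnectedComponent) :=
  (phiIso e G₁ G₂).connectedComponentEquiv.trans (sumCompEquiv G₁ G₂)

lemma bigComp_set (r : ℝ) (G₁ : SimpleGraph (Fin m)) (G₂ : SimpleGraph (Fin k))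
    (hL : ∀ u : Fin m, r < (compSize G₁ u : ℝ))
    (hR : ∀ u : Fin k, (compSize G₂ u : ℝ) ≤ r) :
    {C : (PhiG e G₁ G₂).ConnectedComponent | r < (C.supp.ncard : ℝ)} =
      (E2 e G₁ G₂) ⁻¹' (Set.range Sum.inl) := by
  ext C
  refine SimpleGraph.ConnectedComponent.ind (fun x => ?_) C
  have hsize : (((PhiG e G₁ G₂).connectedComponentMk x).supp.ncard : ℝ) =
      (compSize (PhiG e G₁ G₂) x : ℝ) := rfl
  have hE2 : E2 e G₁ G₂ ((PhiG e G₁ G₂).connectedComponentMk x)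
      = (sumCompEquiv G₁ G₂) ((G₁ ⊕g G₂).connectedComponentMk (e x)) := rfl
  simp only [Set.mem_setOf_eq, Set.mem_preimage, hsize, hE2, compSize_phi e G₁ G₂ x]
  rcases hx : e x with u | u
  · simp only [Sum.elim_inl]
    constructor
    · intro _; exact ⟨G₁.connectedComponentMk u, rfl⟩
    · intro _; exact hL u
  · simp only [Sum.elim_inr]
    constructor
    · intro h; exact absurd h (not_lt.mpr (hR u))
    · rintro ⟨D, hD⟩
      exfalso
      have : ((sumCompEquiv G₁ G₂).symm (Sum.inl D)) = (G₁ ⊕g G₂).connectedComponentMk (Sum.inr u) := by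
        rw [hD, Equiv.symm_apply_apply]
      revert this
      refine SimpleGraph.ConnectedComponent.ind (fun v => ?_) D
      rw [sumCompEquiv_symm_inl]
      intro h
      exact not_reachable_inl_inr (SimpleGraph.ConnectedComponent.exact h)

lemma Nbig_phi (r : ℝ) (G₁ : SimpleGraph (Fin m)) (G₂ : SimpleGraph (Fin k))
    (hL : ∀ u : Fin m, r < (compSize G₁ u : ℝ))
    (hR : ∀ u : Fin k, (compSize G₂ u : ℝ) ≤ r) :
    Nbig (PhiG e G₁ G₂) r = Nat.card G₁.ConnectedComponent := by
  unfold Nbig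
  rw [bigComp_set e r G₁ G₂ hL hR]
  rw [← Equiv.image_symm_eq_preimage]
  rw [Set.ncard_image_of_injective _ (E2 e G₁ G₂).symm.injective]
  rw [← Set.image_univ, Set.ncard_image_of_injective _ Sum.inl_injective, Set.ncard_univ]

lemma Vbig_phi (r : ℝ) (G₁ : SimpleGraph (Fin m)) (G₂ : SimpleGraph (Fin k))
    (hL : ∀ u : Fin m, r < (compSize G₁ u : ℝ))
    (hR : ∀ u : Fin k, (compSize G₂ u : ℝ) ≤ r) :
    Vbig (PhiG e G₁ G₂) r = {x | (e x).isLeft} := by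
  ext x
  simp only [Vbig, Set.mem_setOf_eq, compSize_phi e G₁ G₂ x]
  rcases hx : e x with u | u
  · simp only [Sum.elim_inl, Sum.isLeft_inl, iff_true]
    exact hL u
  · simp only [Sum.elim_inr, Sum.isLeft_inr, Bool.false_eq_true, iff_false, not_lt]
    exact hR u

def PsiL (G : SimpleGraph (Fin n)) : SimpleGraph (Fin m) :=
  G.comap (fun u => e.symm (Sum.inl u))

def PsiR (G : SimpleGraph (Fin n)) : SimpleGraph (Fin k) :=
  G.comap (fun u => e.symm (Sum.inr u))

lemma psiL_phi (G₁ : SimpleGraph (Fin m)) (G₂ : SimpleGraph (Fin k)) :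
    PsiL e (PhiG e G₁ G₂) = G₁ := by
  ext u v
  show (G₁ ⊕g G₂).Adj (e (e.symm (Sum.inl u))) (e (e.symm (Sum.inl v))) ↔ G₁.Adj u v
  rw [Equiv.apply_symm_apply, Equiv.apply_symm_apply]
  rfl

lemma psiR_phi (G₁ : SimpleGraph (Fin m)) (G₂ : SimpleGraph (Fin k)) :
    PsiR e (PhiG e G₁ G₂) = G₂ := by
  ext u v
  show (G₁ ⊕g G₂).Adj (e (e.symm (Sum.inr u))) (e (e.symm (Sum.inr v))) ↔ G₂.Adj u v
  rw [Equiv.apply_symm_apply, Equiv.apply_symm_apply]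
  rfl

lemma phi_psi (G : SimpleGraph (Fin n))
    (hcross : ∀ x y, G.Adj x y → ((e x).isLeft ↔ (e y).isLeft)) :
    PhiG e (PsiL e G) (PsiR e G) = G := by
  ext x y
  show ((PsiL e G) ⊕g (PsiR e G)).Adj (e x) (e y) ↔ G.Adj x y
  rcases hx : e x with u | u <;> rcases hy : e y with v | v
  · have hx' : x = e.symm (Sum.inl u) := by rw [← hx, Equiv.symm_apply_apply]
    have hy' : y = e.symm (Sum.inl v) := by rw [← hy, Equiv.symm_apply_apply]
    show G.Adj (e.symm (Sum.inl u)) (e.symm (Sum.inl v)) ↔ G.Adj x y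
    rw [← hx', ← hy']
  · constructor
    · intro h; exact absurd h (by simp [SimpleGraph.sum])
    · intro h
      have := hcross x y h
      rw [hx, hy] at this
      simp at this
  · constructor
    · intro h; exact absurd h (by simp [SimpleGraph.sum])
    · intro h
      have := hcross x y h
      rw [hx, hy] at this
      simp at this
  · have hx' : x = e.symm (Sum.inr u) := by rw [← hx, Equiv.symm_apply_apply]
    have hy' : y = e.symm (Sum.inr v) := by rw [← hy, Equiv.symm_apply_apply]
    show G.Adj (e.symm (Sum.inr u)) (e.symm (Sum.inr v)) ↔ G.Adj x y
    rw [← hx', ← hy']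

lemma rcW_phi (p q : ℝ) (hm : 1 ≤ m) (hk : 1 ≤ k) (hn : n = m + k)
    (G₁ : SimpleGraph (Fin m)) (G₂ : SimpleGraph (Fin k)) :
    rcW n p q (PhiG e G₁ G₂) = (1 - p) ^ (m * k) * rcW m p q G₁ * rcW k p q G₂ := by
  unfold rcW
  have he : (PhiG e G₁ G₂).edgeSet.ncard = G₁.edgeSet.ncard + G₂.edgeSet.ncard :=
    (ncard_edgeSet_congr (phiIso e G₁ G₂)).trans ncard_edgeSet_sum
  have hc : Nat.card (PhiG e G₁ G₂).ConnectedComponent =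
      Nat.card G₁.ConnectedComponent + Nat.card G₂.ConnectedComponent :=
    (card_cc_congr (phiIso e G₁ G₂)).trans card_cc_sum
  have b1 := ncard_edgeSet_le m G₁
  have b2 := ncard_edgeSet_le k G₂
  have h3 : n * (n - 1) / 2 = m * (m - 1) / 2 + k * (k - 1) / 2 + m * k := by
    rw [hn]; exact triangle_add hm hk
  have hexp : n * (n - 1) / 2 - (PhiG e G₁ G₂).edgeSet.ncard =
      m * k + (m * (m - 1) / 2 - G₁.edgeSet.ncard) + (k * (k - 1) / 2 - G₂.edgeSet.ncard) := by
    omega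
  rw [he] at hexp
  rw [he, hc, hexp, pow_add, pow_add, pow_add, pow_add]
  ring

lemma finsum_mem_set_eq {j : ℕ} (X : Set (SimpleGraph (Fin j))) (f : SimpleGraph (Fin j) → ℝ) :
    ∑ᶠ G ∈ X, f G = ∑ G ∈ (Set.toFinite X).toFinset, f G := by
  rw [← finsum_mem_coe_finset, Set.Finite.coe_toFinset]

lemma hcross_of_Vbig {n m k : ℕ} (e : Fin n ≃ (Fin m ⊕ Fin k)) {S : Finset (Fin n)}
    (he : ∀ x, x ∈ S ↔ (e x).isLeft) {G : SimpleGraph (Fin n)} {r : ℝ}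
    (hV : Vbig G r = ↑S) : ∀ x y, G.Adj x y → ((e x).isLeft ↔ (e y).isLeft) := by
  intro x y hxy
  have hcs : compSize G x = compSize G y := by
    unfold compSize
    rw [SimpleGraph.ConnectedComponent.connectedComponentMk_eq_of_adj hxy]
  have h1 : (x ∈ Vbig G r) ↔ (y ∈ Vbig G r) := by
    simp only [Vbig, Set.mem_setOf_eq, hcs]
  rw [hV] at h1
  simp only [Finset.mem_coe] at h1
  rw [← he x, ← he y]
  exact h1

lemma sum_AS (p q : ℝ) {n m k : ℕ} (r : ℕ) (hr : 1 ≤ r) (hrm : r < m) (hk : 1 ≤ k)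
    (hn : n = m + k) (S : Finset (Fin n)) (e : Fin n ≃ (Fin m ⊕ Fin k))
    (he : ∀ x, x ∈ S ↔ (e x).isLeft) :
    ∑ᶠ G ∈ {G : SimpleGraph (Fin n) | Vbig G (r : ℝ) = ↑S ∧ Nbig G (r : ℝ) = 1}, rcW n p q G
      = (1 - p) ^ (m * k) * (ZP m p q (Kev m) * ZP k p q (Bev k (r : ℝ))) := by
  have hm : 1 ≤ m := by omega
  haveI : Nonempty (Fin m) := ⟨⟨0, by omega⟩⟩
  -- auxiliary facts for members of the event
  have main : ∀ G : SimpleGraph (Fin n), Vbig G (r : ℝ) = ↑S → Nbig G (r : ℝ) = 1 →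
      PhiG e (PsiL e G) (PsiR e G) = G ∧
      (∀ u : Fin m, (r : ℝ) < (compSize (PsiL e G) u : ℝ)) ∧
      (∀ u : Fin k, (compSize (PsiR e G) u : ℝ) ≤ (r : ℝ)) := by
    intro G hV hN
    have hGeq : PhiG e (PsiL e G) (PsiR e G) = G := phi_psi e G (hcross_of_Vbig e he hV)
    refine ⟨hGeq, ?_, ?_⟩
    · intro u
      have h1 : compSize (PsiL e G) u = compSize G (e.symm (Sum.inl u)) := by
        conv_rhs => rw [← hGeq]
        rw [compSize_phi, Equiv.apply_symm_apply, Sum.elim_inl]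
      rw [h1]
      have h2 : e.symm (Sum.inl u) ∈ S := by
        rw [he, Equiv.apply_symm_apply]; rfl
      have h3 : e.symm (Sum.inl u) ∈ Vbig G (r : ℝ) := by rw [hV]; exact h2
      exact h3
    · intro u
      have h1 : compSize (PsiR e G) u = compSize G (e.symm (Sum.inr u)) := by
        conv_rhs => rw [← hGeq]
        rw [compSize_phi, Equiv.apply_symm_apply, Sum.elim_inr]
      rw [h1]
      have h2 : e.symm (Sum.inr u) ∉ S := by
        rw [he, Equiv.apply_symm_apply]; simp
      have h3 : e.symm (Sum.inr u) ∉ Vbig G (r : ℝ) := by rw [hV]; exact fun hc => h2 hc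
      simpa [Vbig, Set.mem_setOf_eq, not_lt] using h3
  rw [finsum_mem_set_eq, ZP, ZP, finsum_mem_set_eq, finsum_mem_set_eq,
    Finset.sum_mul_sum, Finset.mul_sum]
  simp_rw [Finset.mul_sum]
  rw [← Finset.sum_product']
  refine Finset.sum_nbij' (fun G => (PsiL e G, PsiR e G)) (fun pr => PhiG e pr.1 pr.2)
    ?_ ?_ ?_ ?_ ?_
  · -- hi
    intro G hG
    rw [Set.Finite.mem_toFinset, Set.mem_setOf_eq] at hG
    obtain ⟨hV, hN⟩ := hG
    obtain ⟨hGeq, hL, hR⟩ := main G hV hN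
    rw [Finset.mem_product, Set.Finite.mem_toFinset, Set.Finite.mem_toFinset]
    constructor
    · show (PsiL e G).Connected
      rw [← card_cc_eq_one_iff]
      have h4 := Nbig_phi e (r : ℝ) (PsiL e G) (PsiR e G) hL hR
      rw [hGeq, hN] at h4
      exact h4.symm
    · exact hR
  · -- hj
    rintro ⟨G₁, G₂⟩ hpr
    rw [Finset.mem_product, Set.Finite.mem_toFinset, Set.Finite.mem_toFinset] at hpr
    obtain ⟨h1, h2⟩ := hpr
    have hcon : G₁.Connected := h1
    have hL : ∀ u : Fin m, (r : ℝ) < (compSize G₁ u : ℝ) := fun u => by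
      rw [compSize_of_connected hcon u]; exact_mod_cast hrm
    have hR : ∀ u : Fin k, (compSize G₂ u : ℝ) ≤ (r : ℝ) := h2
    rw [Set.Finite.mem_toFinset, Set.mem_setOf_eq]
    constructor
    · rw [Vbig_phi e _ _ _ hL hR]
      ext x
      rw [Set.mem_setOf_eq, Finset.mem_coe]
      exact (he x).symm
    · rw [Nbig_phi e _ _ _ hL hR, card_cc_eq_one_iff]
      exact hcon
  · -- left_inv : ∀ G ∈ FAS, PhiG (PsiL G) (PsiR G) = G
    intro G hG
    rw [Set.Finite.mem_toFinset, Set.mem_setOf_eq] at hG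
    exact (main G hG.1 hG.2).1
  · -- right_inv
    rintro ⟨G₁, G₂⟩ _
    exact Prod.ext (psiL_phi e G₁ G₂) (psiR_phi e G₁ G₂)
  · -- weights
    intro G hG
    rw [Set.Finite.mem_toFinset, Set.mem_setOf_eq] at hG
    obtain ⟨hGeq, -, -⟩ := main G hG.1 hG.2
    conv_lhs => rw [← hGeq]
    rw [rcW_phi e p q hm hk hn]
    ring

end SGAux

/-- Fix `q > 0`, an integer `n ≥ 1`, `0 < λ < n`, and integers
`m, r` with `1 ≤ r < m < n`. Then
`Z_{n,λ,q}[|V_r| = m, N_r = 1] = C(n,m) (1 − λ/n)^{m(n−m)} · Z^{(m)}[K^{(m)}] ·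
Z^{(n−m)}[B_r^{(n−m)}]`, where the weights on `K_m` and `K_{n−m}` use the same
edge weight `p = λ/n` and cluster weight `q`. -/
theorem stmt16 (q lam : ℝ) (n m r : ℕ) (hq : 0 < q) (hn : 1 ≤ n)
    (hlam : 0 < lam) (hlamn : lam < n) (hr : 1 ≤ r) (hrm : r < m) (hmn : m < n) :
    Zrc n lam q
        ({G | (Vbig G (r : ℝ)).ncard = m} ∩ {G | Nbig G (r : ℝ) = 1}) =
      (n.choose m : ℝ) * (1 - lam / n) ^ (m * (n - m)) *
        ZP m (lam / n) q (Kev m) * ZP (n - m) (lam / n) q (Bev (n - m) (r : ℝ)) := by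
  classical
  set k := n - m with hk0
  have hn' : n = m + k := by omega
  have hk1 : 1 ≤ k := by omega
  set p := lam / n with hp0
  have hdisj : (↑(Finset.powersetCard m (Finset.univ : Finset (Fin n))) :
      Set (Finset (Fin n))).PairwiseDisjoint
      (fun S => (Set.toFinite {G : SimpleGraph (Fin n) |
        Vbig G (r : ℝ) = ↑S ∧ Nbig G (r : ℝ) = 1}).toFinset) := by
    intro S _ T _ hST
    refine Finset.disjoint_left.mpr ?_
    intro G hGS hGT
    rw [Set.Finite.mem_toFinset, Set.mem_setOf_eq] at hGS hGT
    exact hST (Finset.coe_injective (hGS.1 ▸ hGT.1 ▸ rfl))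
  have hsets : (Set.toFinite (({G | (Vbig G (r : ℝ)).ncard = m} ∩
        {G | Nbig G (r : ℝ) = 1}) : Set (SimpleGraph (Fin n)))).toFinset
      = (Finset.powersetCard m (Finset.univ : Finset (Fin n))).biUnion
          (fun S => (Set.toFinite {G : SimpleGraph (Fin n) |
            Vbig G (r : ℝ) = ↑S ∧ Nbig G (r : ℝ) = 1}).toFinset) := by
    ext G
    simp only [Set.Finite.mem_toFinset, Set.mem_inter_iff, Set.mem_setOf_eq, Finset.mem_biUnion,
      Finset.mem_powersetCard_univ]
    constructor
    · rintro ⟨h1, h2⟩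
      refine ⟨(Set.toFinite (Vbig G (r : ℝ))).toFinset, ?_, ?_, h2⟩
      · rw [← h1]
        exact (Set.ncard_eq_toFinset_card _ _).symm
      · exact (Set.Finite.coe_toFinset _).symm
    · rintro ⟨S, hcard, hV, hN⟩
      refine ⟨?_, hN⟩
      rw [hV, Set.ncard_coe_finset, hcard]
  have hterm : ∀ S ∈ Finset.powersetCard m (Finset.univ : Finset (Fin n)),
      ∑ G ∈ (Set.toFinite {G : SimpleGraph (Fin n) |
          Vbig G (r : ℝ) = ↑S ∧ Nbig G (r : ℝ) = 1}).toFinset, rcW n p q G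
        = (1 - p) ^ (m * k) * (ZP m p q (Kev m) * ZP k p q (Bev k (r : ℝ))) := by
    intro S hS
    rw [Finset.mem_powersetCard_univ] at hS
    have hSc : Sᶜ.card = k := by
      rw [Finset.card_compl, Fintype.card_fin, hS]
    let e1 : {x // x ∈ S} ≃ Fin m := S.equivFin.trans (finCongr hS)
    let e2 : {x // ¬ x ∈ S} ≃ Fin k :=
      ((Equiv.subtypeEquivRight (fun x => (Finset.mem_compl (s := S)).symm)).trans
        Sᶜ.equivFin).trans (finCongr hSc)
    let e : Fin n ≃ (Fin m ⊕ Fin k) := (Equiv.sumCompl (· ∈ S)).symm.trans (Equiv.sumCongr e1 e2)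
    have he : ∀ x, x ∈ S ↔ (e x).isLeft := by
      intro x
      by_cases hx : x ∈ S
      · simp only [e, Equiv.trans_apply, Equiv.sumCompl_symm_apply_of_pos hx,
          Equiv.sumCongr_apply, Sum.map_inl, Sum.isLeft_inl]
        exact iff_of_true hx trivial
      · simp only [e, Equiv.trans_apply, Equiv.sumCompl_symm_apply_of_neg hx,
          Equiv.sumCongr_apply, Sum.map_inr, Sum.isLeft_inr]
        exact iff_of_false hx (by simp)
    rw [← SGAux.finsum_mem_set_eq]
    exact SGAux.sum_AS p q r hr hrm hk1 hn' S e he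
  have hmain : Zrc n lam q
        ({G | (Vbig G (r : ℝ)).ncard = m} ∩ {G | Nbig G (r : ℝ) = 1})
      = ∑ S ∈ Finset.powersetCard m (Finset.univ : Finset (Fin n)),
          ∑ G ∈ (Set.toFinite {G : SimpleGraph (Fin n) |
            Vbig G (r : ℝ) = ↑S ∧ Nbig G (r : ℝ) = 1}).toFinset, rcW n p q G := by
    unfold Zrc ZP
    rw [SGAux.finsum_mem_set_eq, hsets, Finset.sum_biUnion hdisj]
  rw [hmain, Finset.sum_congr rfl hterm, Finset.sum_const, Finset.card_powersetCard,
    Finset.card_univ, Fintype.card_fin, nsmul_eq_mul]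
  ring
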